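/- Let M be a finite subset of a finite abelian group with M = X ∪ D where D is dissociated. Then for every integer s ≥ 1, T_s(M) ≤ C^s s^s |D|^s + 2^{2s} |X|^{2s-1} for some absolute constant C > 0. -/

import Mathlib

open Finset

def Dissociated {G : Type*} [AddCommGroup G] (Λ : Finset G) : Prop :=
  ∀ ε : G → ℤ, (∀ g, ε g = -1 ∨ ε g = 0 ∨ ε g = 1) → (∀ g ∉ Λ, ε g = 0) →
    ∑ g ∈ Λ, ε g • g = 0 → ∀ g, ε g = 0

def Tk {G : Type*} [AddCommGroup G] [DecidableEq G] (k : ℕ) (A : Finset G) : ℕ :=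
  (((Fintype.piFinset fun _ : Fin k => A) ×ˢ Fintype.piFinset fun _ : Fin k => A).filter
    fun p => ∑ i, p.1 i = ∑ i, p.2 i).card

namespace Stmt12Aux

open scoped BigOperators ComplexConjugate

noncomputable def Complex.abs : AbsoluteValue ℂ ℝ := NormedField.toAbsoluteValue ℂ

lemma Complex.abs_apply (z : ℂ) : Complex.abs z = ‖z‖ := rfl

lemma Complex.norm_eq_abs (z : ℂ) : ‖z‖ = Complex.abs z := rfl

lemma Complex.abs_ofReal (x : ℝ) : Complex.abs (x : ℂ) = |x| := by
  rw [Complex.abs_apply, Complex.norm_real, Real.norm_eq_abs]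

/-! ### Elementary real inequalities -/

lemma exp_mul_le (x t : ℝ) (ht : |t| ≤ 1) : Real.exp (t*x) ≤ Real.cosh x + t * Real.sinh x := by
  have h1 : (1+t)/2 ≥ 0 := by rw [abs_le] at ht; linarith
  have h2 : (1-t)/2 ≥ 0 := by rw [abs_le] at ht; linarith
  have := convexOn_exp.2 (Set.mem_univ x) (Set.mem_univ (-x)) h1 h2 (by ring)
  simp only [smul_eq_mul] at this
  rw [show (1+t)/2 * x + (1-t)/2 * (-x) = t * x by ring] at this
  rw [Real.cosh_eq, Real.sinh_eq]
  calc Real.exp (t*x) ≤ (1+t)/2 * Real.exp x + (1-t)/2 * Real.exp (-x) := this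
    _ = (Real.exp x + Real.exp (-x))/2 + t * ((Real.exp x - Real.exp (-x))/2) := by ring

lemma pow_le_exp_add (l x : ℝ) (hl : 0 < l) (k : ℕ) :
    x^(2*k) ≤ (2*k).factorial / l^(2*k) * (Real.exp (l*x) + Real.exp (-(l*x))) := by
  have hxabs : x^(2*k) = |x|^(2*k) := by
    rw [← abs_pow, abs_of_nonneg (even_two_mul k |>.pow_nonneg x)]
  have h1 : (l*|x|)^(2*k) / (2*k).factorial ≤ Real.exp (l*|x|) := by
    have h0 : 0 ≤ l * |x| := mul_nonneg hl.le (abs_nonneg x)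
    have := Real.sum_le_exp_of_nonneg h0 (2*k+1)
    refine le_trans ?_ this
    exact Finset.single_le_sum (f := fun i => (l*|x|)^i / i.factorial)
      (fun i _ => by positivity) (Finset.mem_range.mpr (Nat.lt_succ_self _))
  have h2 : Real.exp (l*|x|) ≤ Real.exp (l*x) + Real.exp (-(l*x)) := by
    rcases abs_cases x with ⟨h,_⟩ | ⟨h,_⟩
    · rw [h]; nlinarith [Real.exp_pos (-(l*x))]
    · rw [h, mul_neg]; nlinarith [Real.exp_pos (l*x)]
  have h3 : (l*|x|)^(2*k) = l^(2*k) * |x|^(2*k) := mul_pow l _ _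
  rw [hxabs]
  rw [div_le_iff₀ (by positivity), h3] at h1
  have hlp : (0:ℝ) < l^(2*k) := by positivity
  rw [div_mul_eq_mul_div, le_div_iff₀ hlp]
  calc |x|^(2*k) * l^(2*k) = l^(2*k) * |x|^(2*k) := by ring
    _ ≤ Real.exp (l*|x|) * (2*k).factorial := h1
    _ ≤ (Real.exp (l*x) + Real.exp (-(l*x))) * (2*k).factorial := by
        have := Nat.cast_pos (α := ℝ) |>.mpr (Nat.factorial_pos (2*k))
        nlinarith
    _ = ↑(2*k).factorial * (Real.exp (l*x) + Real.exp (-(l*x))) := by ring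

lemma max_pow_le (x y : ℝ) (hx : 0 ≤ x) (hy : 0 ≤ y) (s : ℕ) :
    (x+y)^s ≤ 2^s * (x^s + y^s) := by
  have h1 : x + y ≤ 2 * max x y := by
    rcases le_total x y with h | h
    · rw [max_eq_right h]; linarith
    · rw [max_eq_left h]; linarith
  calc (x+y)^s ≤ (2 * max x y)^s := by
        apply pow_le_pow_left₀ (by positivity) h1
    _ = 2^s * (max x y)^s := mul_pow 2 _ s
    _ ≤ 2^s * (x^s + y^s) := by
        apply mul_le_mul_of_nonneg_left ?_ (by positivity)
        rcases le_total x y with h | h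
        · rw [max_eq_right h]; nlinarith [pow_nonneg hx s]
        · rw [max_eq_left h]; nlinarith [pow_nonneg hy s]

/-! ### The exponential moment bound (Rudin's inequality engine) -/

lemma exp_moment {H : Type*} [AddCommGroup H] [Fintype H] (c : AddChar H ℂ → ℂ)
    (hc : AddDissociated {ψ | c ψ ≠ 0}) :
    ∑ a : H, Real.exp (∑ ψ : AddChar H ℂ, (c ψ * ψ a).re) ≤
      (Fintype.card H : ℝ) * Real.exp ((∑ ψ : AddChar H ℂ, Complex.abs (c ψ)^2)/2) := by
  classical
  set d : AddChar H ℂ → ℂ := fun ψ => c ψ * ((Real.sinh (Complex.abs (c ψ)) / Complex.abs (c ψ) : ℝ) : ℂ) with hd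
  have hdsupp : {ψ | d ψ ≠ 0} ⊆ {ψ | c ψ ≠ 0} := by
    intro ψ hψ
    simp only [Set.mem_setOf_eq, hd] at hψ ⊢
    intro h; exact hψ (by simp [h])
  have hdd : AddDissociated {ψ | d ψ ≠ 0} := hc.subset hdsupp
  have key : ∀ a : H, Real.exp (∑ ψ : AddChar H ℂ, (c ψ * ψ a).re) ≤
      ∏ ψ : AddChar H ℂ, (Real.cosh (Complex.abs (c ψ)) + (d ψ * ψ a).re) := by
    intro a
    rw [Real.exp_sum]
    refine Finset.prod_le_prod (fun ψ _ => (Real.exp_pos _).le) (fun ψ _ => ?_)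
    by_cases h : c ψ = 0
    · simp [h, hd]
    · set r : ℝ := Complex.abs (c ψ) with hr
      have hrpos : 0 < r := by simpa [hr] using h
      set t : ℝ := (c ψ * ψ a).re / r with htdef
      have hnorm : Complex.abs (c ψ * ψ a) = r := by
        rw [map_mul]
        have h1 : Complex.abs (ψ a) = 1 := by
          rw [← Complex.norm_eq_abs]; exact ψ.norm_apply a
        rw [h1, mul_one]
      have ht : |t| ≤ 1 := by
        rw [htdef, abs_div, abs_of_pos hrpos, div_le_one hrpos]
        calc |(c ψ * ψ a).re| ≤ Complex.abs (c ψ * ψ a) := Complex.abs_re_le_norm _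
          _ = r := hnorm
      have htr : t * r = (c ψ * ψ a).re := by rw [htdef, div_mul_cancel₀ _ hrpos.ne']
      have hdre : (d ψ * ψ a).re = t * Real.sinh r := by
        have h2 : d ψ * ψ a = (c ψ * ψ a) * ((Real.sinh r / r : ℝ) : ℂ) := by
          rw [hd]; ring
        rw [h2, Complex.mul_re]
        simp only [Complex.ofReal_re, Complex.ofReal_im, mul_zero, sub_zero]
        rw [htdef]
        field_simp
      rw [hdre, ← htr]
      exact exp_mul_le r t ht
  calc ∑ a : H, Real.exp (∑ ψ : AddChar H ℂ, (c ψ * ψ a).re)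
      ≤ ∑ a : H, ∏ ψ : AddChar H ℂ, (Real.cosh (Complex.abs (c ψ)) + (d ψ * ψ a).re) :=
        Finset.sum_le_sum fun a _ => key a
    _ = (Fintype.card H : ℝ) * ∏ ψ : AddChar H ℂ, Real.cosh (Complex.abs (c ψ)) := by
        rw [← hdd.randomisation (fun ψ => Real.cosh (Complex.abs (c ψ))) d,
          ← Fintype.card_mul_expect]
    _ ≤ (Fintype.card H : ℝ) * Real.exp ((∑ ψ : AddChar H ℂ, Complex.abs (c ψ)^2)/2) := by
        refine mul_le_mul_of_nonneg_left ?_ (Nat.cast_nonneg _)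
        rw [show (∑ ψ : AddChar H ℂ, Complex.abs (c ψ)^2)/2
            = ∑ ψ : AddChar H ℂ, (Complex.abs (c ψ)^2/2) by rw [Finset.sum_div], Real.exp_sum]
        exact Finset.prod_le_prod (fun ψ _ => (Real.cosh_pos _).le)
          (fun ψ _ => Real.cosh_le_exp_half_sq _)

lemma exp_moment_unit {H : Type*} [AddCommGroup H] [Fintype H] (Λ : Finset (AddChar H ℂ))
    (hΛ : AddDissociated (Λ : Set (AddChar H ℂ))) (u : ℂ) (hu : Complex.abs u = 1) (l : ℝ) :
    ∑ a : H, Real.exp (l * (u * ∑ χ ∈ Λ, χ a).re) ≤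
      (Fintype.card H : ℝ) * Real.exp (l^2 * Λ.card / 2) := by
  classical
  set c : AddChar H ℂ → ℂ := fun χ => if χ ∈ Λ then (l:ℂ) * u else 0 with hc
  have hsupp : {ψ | c ψ ≠ 0} ⊆ (Λ : Set _) := by
    intro ψ hψ
    simp only [Set.mem_setOf_eq, hc] at hψ
    by_contra h
    simp only [Finset.mem_coe] at h
    exact hψ (if_neg h)
  have hdiss : AddDissociated {ψ | c ψ ≠ 0} := hΛ.subset hsupp
  have h1 : ∀ a : H, ∑ ψ : AddChar H ℂ, (c ψ * ψ a).re = l * (u * ∑ χ ∈ Λ, χ a).re := by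
    intro a
    have hsum : ∑ ψ : AddChar H ℂ, c ψ * ψ a = (l:ℂ) * (u * ∑ χ ∈ Λ, χ a) := by
      simp only [hc, ite_mul, zero_mul]
      rw [Finset.sum_ite_mem, Finset.univ_inter, Finset.mul_sum, Finset.mul_sum]
      exact Finset.sum_congr rfl fun χ _ => by ring
    rw [← Complex.re_sum, hsum, Complex.re_ofReal_mul]
  have h2 : ∑ ψ : AddChar H ℂ, Complex.abs (c ψ)^2 = l^2 * Λ.card := by
    simp only [hc, apply_ite Complex.abs, map_zero]
    simp only [ite_pow, zero_pow, OfNat.ofNat_ne_zero, ne_eq, not_false_iff]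
    rw [Finset.sum_ite_mem, Finset.univ_inter, Finset.sum_const, nsmul_eq_mul]
    rw [map_mul, hu, mul_one, Complex.abs_ofReal, sq_abs]
    ring
  calc ∑ a : H, Real.exp (l * (u * ∑ χ ∈ Λ, χ a).re)
      = ∑ a : H, Real.exp (∑ ψ : AddChar H ℂ, (c ψ * ψ a).re) :=
        Finset.sum_congr rfl fun a _ => by rw [h1]
    _ ≤ (Fintype.card H : ℝ) * Real.exp ((∑ ψ : AddChar H ℂ, Complex.abs (c ψ)^2)/2) :=
        exp_moment c hdiss
    _ = (Fintype.card H : ℝ) * Real.exp (l^2 * Λ.card / 2) := by rw [h2]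

lemma re_moment {H : Type*} [AddCommGroup H] [Fintype H] (Λ : Finset (AddChar H ℂ))
    (hΛ : AddDissociated (Λ : Set (AddChar H ℂ))) (s : ℕ) (hs : 1 ≤ s)
    (hn : 0 < Λ.card) (u : ℂ) (hu : Complex.abs u = 1) :
    ∑ a : H, ((u * ∑ χ ∈ Λ, χ a).re)^(2*s) ≤
      2 * (Fintype.card H : ℝ) * (2*s : ℝ)^s * Real.exp s * (Λ.card : ℝ)^s := by
  classical
  set n : ℝ := (Λ.card : ℝ) with hndef
  have hnpos : (0:ℝ) < n := by rw [hndef]; exact_mod_cast hn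
  have hspos : (0:ℝ) < (s:ℝ) := by exact_mod_cast hs
  set l : ℝ := Real.sqrt (2*s/n) with hldef
  have hlpos : 0 < l := Real.sqrt_pos.mpr (by positivity)
  have hl2 : l^2 = 2*s/n := Real.sq_sqrt (by positivity)
  have hl2s : l^(2*s) = (2*s/n)^s := by
    rw [pow_mul, hl2]
  have step1 : ∑ a : H, ((u * ∑ χ ∈ Λ, χ a).re)^(2*s) ≤
      (2*s).factorial / l^(2*s) * (2 * (Fintype.card H : ℝ) * Real.exp (l^2 * n / 2)) := by
    calc ∑ a : H, ((u * ∑ χ ∈ Λ, χ a).re)^(2*s)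
        ≤ ∑ a : H, (2*s).factorial / l^(2*s) *
            (Real.exp (l * (u * ∑ χ ∈ Λ, χ a).re) + Real.exp (-(l * (u * ∑ χ ∈ Λ, χ a).re))) :=
          Finset.sum_le_sum fun a _ => pow_le_exp_add l _ hlpos s
      _ = (2*s).factorial / l^(2*s) * ((∑ a : H, Real.exp (l * (u * ∑ χ ∈ Λ, χ a).re)) +
            ∑ a : H, Real.exp (l * ((-u) * ∑ χ ∈ Λ, χ a).re)) := by
          rw [← Finset.mul_sum, Finset.sum_add_distrib]
          congr 2
          exact Finset.sum_congr rfl fun a _ => by rw [neg_mul, Complex.neg_re, mul_neg]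
      _ ≤ (2*s).factorial / l^(2*s) * ((Fintype.card H : ℝ) * Real.exp (l^2 * Λ.card / 2) +
            (Fintype.card H : ℝ) * Real.exp (l^2 * Λ.card / 2)) := by
          apply mul_le_mul_of_nonneg_left ?_ (by positivity)
          exact add_le_add (exp_moment_unit Λ hΛ u hu l)
            (exp_moment_unit Λ hΛ (-u) (by rw [AbsoluteValue.map_neg]; exact hu) l)
      _ = (2*s).factorial / l^(2*s) * (2 * (Fintype.card H : ℝ) * Real.exp (l^2 * n / 2)) := by
          rw [hndef]; ring
  have harith : (2*s).factorial / l^(2*s) * (2 * (Fintype.card H : ℝ) * Real.exp (l^2 * n / 2)) ≤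
      2 * (Fintype.card H : ℝ) * (2*s : ℝ)^s * Real.exp s * n^s := by
    have hfact : ((2*s).factorial : ℝ) ≤ ((2*s : ℝ))^(2*s) := by
      calc ((2*s).factorial : ℝ) ≤ ((2*s)^(2*s) : ℕ) := by exact_mod_cast Nat.factorial_le_pow (2*s)
        _ = ((2*s : ℝ))^(2*s) := by push_cast; ring
    have hexp : l^2 * n / 2 = s := by rw [hl2]; field_simp
    rw [hexp, hl2s, div_mul_eq_mul_div, div_le_iff₀ (by positivity)]
    have hrhs : ((2*s:ℝ))^(2*s) = ((2*s:ℝ))^s * ((2*s:ℝ))^s := by rw [← pow_add]; ring_nf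
    calc ((2*s).factorial : ℝ) * (2 * (Fintype.card H : ℝ) * Real.exp s)
        ≤ ((2*s:ℝ))^(2*s) * (2 * (Fintype.card H : ℝ) * Real.exp s) := by
          apply mul_le_mul_of_nonneg_right hfact (by positivity)
      _ = 2 * (Fintype.card H : ℝ) * ((2*s:ℝ))^s * Real.exp s * n^s * ((2*s:ℝ)/n)^s := by
          rw [hrhs, div_pow]
          field_simp
  · push_cast at harith ⊢
    linarith [step1]

lemma rudin {H : Type*} [AddCommGroup H] [Fintype H] (Λ : Finset (AddChar H ℂ))
    (hΛ : AddDissociated (Λ : Set (AddChar H ℂ))) (s : ℕ) (hs : 1 ≤ s) :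
    ∑ a : H, (Complex.abs (∑ χ ∈ Λ, χ a))^(2*s) ≤
      (Fintype.card H : ℝ) * ((48:ℝ)^s * (s:ℝ)^s * (Λ.card : ℝ)^s) := by
  classical
  rcases Nat.eq_zero_or_pos Λ.card with h0 | hn
  · have hΛe : Λ = ∅ := Finset.card_eq_zero.mp h0
    subst hΛe
    simp only [Finset.sum_empty, map_zero, Finset.card_empty, Nat.cast_zero]
    rw [zero_pow (by omega), zero_pow (by omega)]
    simp
  · set f : H → ℂ := fun a => ∑ χ ∈ Λ, χ a with hf
    have habs : ∀ z : ℂ, (Complex.abs z)^(2*s) = (z.re^2 + z.im^2)^s := fun z => by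
      rw [pow_mul, Complex.abs_apply, Complex.sq_norm, Complex.normSq_apply]; ring_nf
    have hre : ∀ a : H, (f a).re = ((1:ℂ) * f a).re := fun a => by rw [one_mul]
    have him : ∀ z : ℂ, z.im = ((-Complex.I) * z).re := fun z => by
      simp [Complex.mul_re]
    have step1 : ∑ a : H, (Complex.abs (f a))^(2*s) ≤
        2^s * ((∑ a : H, (((1:ℂ) * f a).re)^(2*s)) + ∑ a : H, (((-Complex.I) * f a).re)^(2*s)) := by
      rw [mul_add, Finset.mul_sum, Finset.mul_sum, ← Finset.sum_add_distrib]
      refine Finset.sum_le_sum fun a _ => ?_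
      rw [habs]
      calc ((f a).re^2 + (f a).im^2)^s ≤ 2^s * (((f a).re^2)^s + ((f a).im^2)^s) :=
            max_pow_le _ _ (sq_nonneg _) (sq_nonneg _) s
        _ = 2^s * ((((1:ℂ) * f a).re)^(2*s) + (((-Complex.I) * f a).re)^(2*s)) := by
            rw [← hre, ← him, pow_mul, pow_mul]
        _ = 2^s * (((1:ℂ) * f a).re^(2*s)) + 2^s * (((-Complex.I) * f a).re^(2*s)) := by ring
    have b1 := re_moment Λ hΛ s hs hn 1 (by simp)
    have b2 := re_moment Λ hΛ s hs hn (-Complex.I) (by simp [Complex.abs_apply])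
    have hexp3 : Real.exp s ≤ (3:ℝ)^s := by
      rw [← Real.exp_one_pow]
      exact pow_le_pow_left₀ (Real.exp_pos 1).le
        (le_trans Real.exp_one_lt_d9.le (by norm_num)) s
    have hnum : (2:ℝ)^s * (2 * (2 * (Fintype.card H : ℝ) * (2*s : ℝ)^s * Real.exp s * (Λ.card : ℝ)^s)) ≤
        (Fintype.card H : ℝ) * ((48:ℝ)^s * (s:ℝ)^s * (Λ.card : ℝ)^s) := by
      have h4 : (4:ℝ) ≤ 4^s := by
        calc (4:ℝ) = 4^1 := (pow_one 4).symm
          _ ≤ 4^s := pow_le_pow_right₀ (by norm_num) hs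
      have h2s : ((2*s:ℝ))^s = 2^s * (s:ℝ)^s := mul_pow 2 _ s
      have hss : (0:ℝ) ≤ (s:ℝ)^s := by positivity
      calc (2:ℝ)^s * (2 * (2 * (Fintype.card H : ℝ) * (2*s : ℝ)^s * Real.exp s * (Λ.card : ℝ)^s))
          = 4 * (2^s * 2^s * Real.exp s) * (s:ℝ)^s * ((Fintype.card H : ℝ) * (Λ.card : ℝ)^s) := by
            rw [h2s]; ring
        _ ≤ 4^s * (2^s * 2^s * 3^s) * (s:ℝ)^s * ((Fintype.card H : ℝ) * (Λ.card : ℝ)^s) := by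
            have hmain : 4 * (2^s * 2^s * Real.exp s) ≤ 4^s * ((2:ℝ)^s * 2^s * 3^s) := by
              have hstep : (4:ℝ) * (2^s * 2^s * Real.exp s) ≤ 4^s * (2^s * 2^s * Real.exp s) := by
                apply mul_le_mul_of_nonneg_right h4 (by positivity)
              refine le_trans hstep ?_
              apply mul_le_mul_of_nonneg_left ?_ (by positivity)
              apply mul_le_mul_of_nonneg_left hexp3 (by positivity)
            apply mul_le_mul_of_nonneg_right ?_ (by positivity)
            apply mul_le_mul_of_nonneg_right hmain hss
        _ = (Fintype.card H : ℝ) * ((48:ℝ)^s * (s:ℝ)^s * (Λ.card : ℝ)^s) := by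
            rw [show (48:ℝ)^s = 4^s * (2^s * 2^s * 3^s) from by
              rw [← mul_pow, ← mul_pow, ← mul_pow]; norm_num]
            ring
    calc ∑ a : H, (Complex.abs (f a))^(2*s)
        ≤ 2^s * ((∑ a : H, (((1:ℂ) * f a).re)^(2*s)) + ∑ a : H, (((-Complex.I) * f a).re)^(2*s)) := step1
      _ ≤ 2^s * (2 * (2 * (Fintype.card H : ℝ) * (2*s : ℝ)^s * Real.exp s * (Λ.card : ℝ)^s)) := by
          have := add_le_add b1 b2
          apply mul_le_mul_of_nonneg_left ?_ (by positivity)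
          linarith
      _ ≤ (Fintype.card H : ℝ) * ((48:ℝ)^s * (s:ℝ)^s * (Λ.card : ℝ)^s) := hnum

/-! ### Parseval-type identity -/

lemma addchar_map_sum {A M : Type*} [AddCommGroup A] [CommMonoid M] (ψ : AddChar A M)
    {ι : Type*} (t : Finset ι) (g : ι → A) : ψ (∑ i ∈ t, g i) = ∏ i ∈ t, ψ (g i) := by
  classical
  induction t using Finset.cons_induction with
  | empty => simp
  | cons i t hi ih => rw [Finset.sum_cons, Finset.prod_cons, AddChar.map_add_eq_mul, ih]

lemma parseval {G : Type*} [AddCommGroup G] [Fintype G] [DecidableEq G] (A : Finset G) (s : ℕ) :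
    ∑ ψ : AddChar G ℂ, (Complex.abs (∑ a ∈ A, ψ a))^(2*s) =
      (Fintype.card G : ℝ) * (Tk s A : ℝ) := by
  classical
  have key : ∑ ψ : AddChar G ℂ, ((∑ a ∈ A, ψ a)^s * (∑ a ∈ A, ψ (-a))^s) =
      ((Fintype.card G : ℝ) * (Tk s A : ℝ) : ℂ) := by
    have expand : ∀ ψ : AddChar G ℂ, (∑ a ∈ A, ψ a)^s * (∑ a ∈ A, ψ (-a))^s =
        ∑ p ∈ (Fintype.piFinset fun _ : Fin s => A) ×ˢ Fintype.piFinset fun _ : Fin s => A,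
          ψ (∑ i, p.1 i - ∑ i, p.2 i) := by
      intro ψ
      rw [Finset.sum_pow', Finset.sum_pow', Finset.sum_mul_sum, ← Finset.sum_product']
      refine Finset.sum_congr rfl fun p _ => ?_
      rw [sub_eq_add_neg, AddChar.map_add_eq_mul, addchar_map_sum, ← Finset.sum_neg_distrib,
        addchar_map_sum]
    rw [Finset.sum_congr rfl fun ψ _ => expand ψ, Finset.sum_comm]
    rw [Finset.sum_congr rfl fun p _ => AddChar.sum_apply_eq_ite _]
    rw [Finset.sum_ite, Finset.sum_const, Finset.sum_const_zero, add_zero, nsmul_eq_mul]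
    rw [show ((((Fintype.piFinset fun _ : Fin s => A) ×ˢ Fintype.piFinset fun _ : Fin s => A).filter
        fun p => ∑ i, p.1 i - ∑ i, p.2 i = 0)) = (((Fintype.piFinset fun _ : Fin s => A) ×ˢ
        Fintype.piFinset fun _ : Fin s => A).filter fun p => ∑ i, p.1 i = ∑ i, p.2 i) from
      Finset.filter_congr fun p _ => by rw [sub_eq_zero]]
    rw [Tk]
    push_cast
    ring
  have cast1 : ((∑ ψ : AddChar G ℂ, (Complex.abs (∑ a ∈ A, ψ a))^(2*s) : ℝ) : ℂ) =
      ∑ ψ : AddChar G ℂ, ((∑ a ∈ A, ψ a)^s * (∑ a ∈ A, ψ (-a))^s) := by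
    push_cast
    refine Finset.sum_congr rfl fun ψ _ => ?_
    have h1 : ∑ a ∈ A, ψ (-a) = conj (∑ a ∈ A, ψ a) := by
      rw [map_sum (starRingEnd ℂ)]
      exact Finset.sum_congr rfl fun a _ => AddChar.map_neg_eq_conj ψ a
    rw [h1, ← map_pow, Complex.mul_conj, Complex.normSq_eq_norm_sq, ← Complex.abs_apply, ← map_pow, ← pow_mul, mul_comm s 2,
      map_pow]
    push_cast
    ring
  rw [← Complex.ofReal_inj, cast1, key]
  push_cast
  ring

/-! ### Transfer of dissociativity -/

lemma diss_to_mathlib {G : Type*} [AddCommGroup G] [DecidableEq G] (D : Finset G)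
    (h : Dissociated D) : AddDissociated (D : Set G) := by
  intro t ht u hu htu
  simp only [Set.mem_setOf_eq] at ht hu
  have htD : t ⊆ D := Finset.coe_subset.1 ht
  have huD : u ⊆ D := Finset.coe_subset.1 hu
  set ε : G → ℤ := fun g => (if g ∈ t then 1 else 0) - (if g ∈ u then 1 else 0) with hε
  have h1 : ∀ g, ε g = -1 ∨ ε g = 0 ∨ ε g = 1 := by
    intro g; simp only [hε]; split <;> split <;> simp
  have h2 : ∀ g ∉ D, ε g = 0 := by
    intro g hg
    simp only [hε, if_neg (fun hgt => hg (htD hgt)), if_neg (fun hgu => hg (huD hgu)), sub_self]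
  have h3 : ∑ g ∈ D, ε g • g = 0 := by
    have e1 : ∀ g : G, ε g • g = (if g ∈ t then g else 0) - (if g ∈ u then g else 0) := by
      intro g; simp only [hε, sub_smul]; congr 1 <;> (split <;> simp)
    rw [Finset.sum_congr rfl fun g _ => e1 g, Finset.sum_sub_distrib,
      Finset.sum_ite_mem, Finset.sum_ite_mem, Finset.inter_eq_right.2 htD,
      Finset.inter_eq_right.2 huD]
    simp only at htu
    rw [htu, sub_self]
  have h4 := h ε h1 h2 h3
  ext g
  have hg := h4 g
  simp only [hε] at hg
  constructor <;> intro hmem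
  · by_contra hgu
    rw [if_pos hmem, if_neg hgu] at hg; norm_num at hg
  · by_contra hgt
    rw [if_neg hgt, if_pos hmem] at hg; norm_num at hg

lemma tk_one {G : Type*} [AddCommGroup G] [DecidableEq G] (X : Finset G) :
    Tk 1 X = X.card := by
  rw [Tk]
  apply Finset.card_bij (fun p _ => p.1 0)
  · intro p hp
    simp only [Finset.mem_filter, Finset.mem_product, Fintype.mem_piFinset] at hp
    exact hp.1.1 0
  · intro p hp q hq hpq
    simp only [Finset.mem_filter, Finset.mem_product, Fin.sum_univ_one] at hp hq
    have h1 : p.1 = q.1 := funext fun i => by rw [Subsingleton.elim i 0, hpq]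
    have h2 : p.2 = q.2 := funext fun i => by
      rw [Subsingleton.elim i 0, ← hp.2, ← hq.2, hpq]
    exact Prod.ext h1 h2
  · intro x hx
    refine ⟨((fun _ => x), (fun _ => x)), ?_, rfl⟩
    simp only [Finset.mem_filter, Finset.mem_product, Fintype.mem_piFinset]
    exact ⟨⟨fun _ => hx, fun _ => hx⟩, by simp⟩

end Stmt12Aux

open Stmt12Aux in
/-- If `M = X ∪ D` with `D` dissociated (in a finite abelian group), then
`T_s(M) ≤ C^s s^s |D|^s + 2^{2s} |X|^{2s-1}` for an absolute constant `C > 0`. -/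
theorem stmt12 :
    ∃ C : ℝ, 0 < C ∧ ∀ (G : Type*) [AddCommGroup G] [Fintype G] [DecidableEq G]
      (M X D : Finset G), Dissociated D → M = X ∪ D →
      ∀ s : ℕ, 1 ≤ s →
        (Tk s M : ℝ) ≤ C ^ s * (s : ℝ) ^ s * (D.card : ℝ) ^ s +
          2 ^ (2 * s) * (X.card : ℝ) ^ (2 * s - 1) := by
  classical
  refine ⟨192, by norm_num, ?_⟩
  intro G _ _ _ M X D hD hM s hs
  set N : ℝ := (Fintype.card G : ℝ) with hN
  have hNpos : (0:ℝ) < N := by rw [hN]; exact_mod_cast Fintype.card_pos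
  set D' : Finset G := D \ X with hD'
  have hunion : M = X ∪ D' := by rw [hM, hD', Finset.union_sdiff_self_eq_union]
  have hdisj : Disjoint X D' := Finset.disjoint_sdiff
  have hD'sub : D' ⊆ D := Finset.sdiff_subset
  have hD'diss : AddDissociated (D' : Set G) :=
    (diss_to_mathlib D hD).subset (Finset.coe_subset.2 hD'sub)
  -- transfer to the double dual
  set Λ : Finset (AddChar (AddChar G ℂ) ℂ) :=
    D'.image (fun d => AddChar.doubleDualEmb d) with hΛdef
  have hΛdiss : AddDissociated (Λ : Set (AddChar (AddChar G ℂ) ℂ)) := by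
    rw [hΛdef, Finset.coe_image]
    have himg : (fun d => (AddChar.doubleDualEmb d : AddChar (AddChar G ℂ) ℂ)) '' (D' : Set G)
        = ⇑(AddChar.doubleDualEquiv (α := G)).symm ⁻¹' (D' : Set G) := by
      rw [← AddChar.coe_doubleDualEquiv]
      exact Equiv.image_eq_preimage_symm (AddChar.doubleDualEquiv (α := G)).toEquiv _
    rw [himg]
    exact (AddEquiv.addDissociated_preimage _).2 hD'diss
  have hΛcard : Λ.card = D'.card :=
    Finset.card_image_of_injective _ AddChar.doubleDualEmb_injective
  have hΛsum : ∀ ψ : AddChar G ℂ, ∑ χ ∈ Λ, χ ψ = ∑ d ∈ D', ψ d := by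
    intro ψ
    rw [hΛdef, Finset.sum_image (fun a _ b _ hab => AddChar.doubleDualEmb_injective hab)]
    simp [AddChar.doubleDualEmb_apply]
  -- Rudin's inequality for D'
  have hrudin : ∑ ψ : AddChar G ℂ, (Complex.abs (∑ d ∈ D', ψ d))^(2*s) ≤
      N * ((48:ℝ)^s * (s:ℝ)^s * (D.card : ℝ)^s) := by
    have h := rudin Λ hΛdiss s hs
    rw [Finset.sum_congr rfl fun ψ _ => by rw [hΛsum ψ]] at h
    refine le_trans h ?_
    rw [AddChar.card_eq, hΛcard]
    refine mul_le_mul_of_nonneg_left ?_ hNpos.le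
    refine mul_le_mul_of_nonneg_left ?_ (by positivity)
    exact pow_le_pow_left₀ (by positivity) (by exact_mod_cast Finset.card_le_card hD'sub) s
  -- trivial bound for X
  have hXbound : ∑ ψ : AddChar G ℂ, (Complex.abs (∑ a ∈ X, ψ a))^(2*s) ≤
      N * (X.card : ℝ)^(2*s-1) := by
    have habsle : ∀ ψ : AddChar G ℂ, Complex.abs (∑ a ∈ X, ψ a) ≤ (X.card : ℝ) := by
      intro ψ
      calc Complex.abs (∑ a ∈ X, ψ a) ≤ ∑ a ∈ X, Complex.abs (ψ a) :=
            Complex.abs.sum_le _ _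
        _ = ∑ _a ∈ X, (1:ℝ) := Finset.sum_congr rfl fun a _ => by
            rw [← Complex.norm_eq_abs]; exact ψ.norm_apply a
        _ = (X.card : ℝ) := by simp
    have hpoint : ∀ ψ : AddChar G ℂ, (Complex.abs (∑ a ∈ X, ψ a))^(2*s) ≤
        (X.card : ℝ)^(2*s-2) * (Complex.abs (∑ a ∈ X, ψ a))^(2*1) := by
      intro ψ
      rw [show 2*s = (2*s-2) + 2*1 by omega, pow_add]
      exact mul_le_mul_of_nonneg_right
        (pow_le_pow_left₀ (AbsoluteValue.nonneg _ _) (habsle ψ) _) (by positivity)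
    calc ∑ ψ : AddChar G ℂ, (Complex.abs (∑ a ∈ X, ψ a))^(2*s)
        ≤ ∑ ψ : AddChar G ℂ, (X.card : ℝ)^(2*s-2) * (Complex.abs (∑ a ∈ X, ψ a))^(2*1) :=
          Finset.sum_le_sum fun ψ _ => hpoint ψ
      _ = (X.card : ℝ)^(2*s-2) * (N * (Tk 1 X : ℝ)) := by
          rw [← Finset.mul_sum, parseval X 1]
      _ = N * (X.card : ℝ)^(2*s-1) := by
          rw [tk_one]
          rw [show (X.card : ℝ)^(2*s-1) = (X.card : ℝ)^(2*s-2) * (X.card : ℝ) from by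
            rw [show 2*s-1 = (2*s-2)+1 by omega, pow_succ]]
          ring
  -- triangle inequality pointwise
  have htri : ∑ ψ : AddChar G ℂ, (Complex.abs (∑ a ∈ M, ψ a))^(2*s) ≤
      2^(2*s) * ((∑ ψ : AddChar G ℂ, (Complex.abs (∑ a ∈ X, ψ a))^(2*s)) +
        ∑ ψ : AddChar G ℂ, (Complex.abs (∑ d ∈ D', ψ d))^(2*s)) := by
    rw [mul_add, Finset.mul_sum, Finset.mul_sum, ← Finset.sum_add_distrib]
    refine Finset.sum_le_sum fun ψ _ => ?_
    have hMsum : ∑ a ∈ M, ψ a = (∑ a ∈ X, ψ a) + ∑ d ∈ D', ψ d := by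
      rw [hunion, Finset.sum_union hdisj]
    calc (Complex.abs (∑ a ∈ M, ψ a))^(2*s)
        ≤ (Complex.abs (∑ a ∈ X, ψ a) + Complex.abs (∑ d ∈ D', ψ d))^(2*s) := by
          apply pow_le_pow_left₀ (AbsoluteValue.nonneg _ _)
          rw [hMsum]
          exact Complex.abs.add_le _ _
      _ ≤ 2^(2*s) * ((Complex.abs (∑ a ∈ X, ψ a))^(2*s) + (Complex.abs (∑ d ∈ D', ψ d))^(2*s)) :=
          max_pow_le _ _ (AbsoluteValue.nonneg _ _) (AbsoluteValue.nonneg _ _) (2*s)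
      _ = 2^(2*s) * (Complex.abs (∑ a ∈ X, ψ a))^(2*s) +
            2^(2*s) * (Complex.abs (∑ d ∈ D', ψ d))^(2*s) := by ring
  -- assemble
  have hmain : N * (Tk s M : ℝ) ≤
      N * ((192:ℝ)^s * (s:ℝ)^s * (D.card : ℝ)^s + 2^(2*s) * (X.card : ℝ)^(2*s-1)) := by
    calc N * (Tk s M : ℝ)
        = ∑ ψ : AddChar G ℂ, (Complex.abs (∑ a ∈ M, ψ a))^(2*s) := (parseval M s).symm
      _ ≤ 2^(2*s) * ((∑ ψ : AddChar G ℂ, (Complex.abs (∑ a ∈ X, ψ a))^(2*s)) +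
            ∑ ψ : AddChar G ℂ, (Complex.abs (∑ d ∈ D', ψ d))^(2*s)) := htri
      _ ≤ 2^(2*s) * (N * (X.card : ℝ)^(2*s-1) + N * ((48:ℝ)^s * (s:ℝ)^s * (D.card : ℝ)^s)) := by
          apply mul_le_mul_of_nonneg_left (add_le_add hXbound hrudin) (by positivity)
      _ = N * ((2^(2*s) * (48:ℝ)^s) * (s:ℝ)^s * (D.card : ℝ)^s +
            2^(2*s) * (X.card : ℝ)^(2*s-1)) := by ring
      _ = N * ((192:ℝ)^s * (s:ℝ)^s * (D.card : ℝ)^s + 2^(2*s) * (X.card : ℝ)^(2*s-1)) := by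
          rw [show (2:ℝ)^(2*s) * (48:ℝ)^s = (192:ℝ)^s from by
            rw [pow_mul, ← mul_pow]; norm_num]
  exact le_of_mul_le_mul_left hmain hNpos
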